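/- arXiv:2202.05946 — 5 statements merged into one kernel-verified Lean document; each statement's English description precedes it below -/
import Mathlib

section
/- Let g ∈ (1,2), γ ∈ [0,1), and ε ∈ (0, 1 - √((2-g)/g)). Then the quantity y = (1 + g + √((g-1)(g - 1 - εg + ε²g/2)))/(1-γ) is a well-defined real number (the expression under the square root is nonnegative), and moreover 2/(1-γ) < y < 2g/(1-γ). -/
theorem stmt_1 (g γ ε : ℝ)
    (hg : g ∈ Set.Ioo (1 : ℝ) 2) (hγ : γ ∈ Set.Ico (0 : ℝ) 1)
    (hε : ε ∈ Set.Ioo (0 : ℝ) (1 - Real.sqrt ((2 - g) / g))) :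
    0 ≤ (g - 1) * (g - 1 - ε * g + ε ^ 2 * g / 2) ∧
    2 / (1 - γ) <
      (1 + g + Real.sqrt ((g - 1) * (g - 1 - ε * g + ε ^ 2 * g / 2))) / (1 - γ) ∧
    (1 + g + Real.sqrt ((g - 1) * (g - 1 - ε * g + ε ^ 2 * g / 2))) / (1 - γ) <
      2 * g / (1 - γ) := by
  obtain ⟨hg1, hg2⟩ := hg
  obtain ⟨hγ0, hγ1⟩ := hγ
  obtain ⟨hε0, hε1⟩ := hε
  have hg0 : (0:ℝ) < g := by linarith
  have hne : (0:ℝ) ≤ (2 - g) / g := div_nonneg (by linarith) hg0.le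
  have hs := Real.sq_sqrt hne
  have hsn := Real.sqrt_nonneg ((2 - g) / g)
  have hsq : (2 - g) / g < (1 - ε) ^ 2 := by
    calc (2 - g) / g = Real.sqrt ((2 - g) / g) ^ 2 := hs.symm
    _ < (1 - ε) ^ 2 := by nlinarith
  have hfac : 0 < g - 1 - ε * g + ε ^ 2 * g / 2 := by
    have := (div_lt_iff₀ hg0).mp hsq
    nlinarith
  have hS : 0 < (g - 1) * (g - 1 - ε * g + ε ^ 2 * g / 2) := by
    apply mul_pos (by linarith) hfac
  have hγd : (0:ℝ) < 1 - γ := by linarith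
  have hsqn := Real.sqrt_nonneg ((g - 1) * (g - 1 - ε * g + ε ^ 2 * g / 2))
  refine ⟨hS.le, ?_, ?_⟩
  · have h2 : (2:ℝ) < 1 + g + Real.sqrt ((g - 1) * (g - 1 - ε * g + ε ^ 2 * g / 2)) := by
      nlinarith
    exact div_lt_div_of_pos_right h2 hγd
  · have hε2 : ε < 2 := by nlinarith
    have hlt : Real.sqrt ((g - 1) * (g - 1 - ε * g + ε ^ 2 * g / 2)) < g - 1 := by
      rw [show (1:ℝ) = 1 from rfl, Real.sqrt_lt' (by linarith : (0:ℝ) < g - 1)]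
      nlinarith [mul_pos (mul_pos (mul_pos (sub_pos.mpr hg1) hε0) hg0) (by linarith : (0:ℝ) < 1 - ε/2)]
    have h2 : 1 + g + Real.sqrt ((g - 1) * (g - 1 - ε * g + ε ^ 2 * g / 2)) < 2 * g := by
      linarith
    exact div_lt_div_of_pos_right h2 hγd
end

section
/- Let f, h : [0,∞) → ℝ be continuously differentiable, and let U : ℝ × ℝ → ℝ be Lipschitz, strictly decreasing in its first argument and strictly increasing in its second. Let r_n, r_i : [0,∞) → ℝ be continuous with r_n(t) > r_i(t) for all t. Suppose f'(t) = U(f(t), r_n(t)) and h'(t) = U(h(t), r_i(t)) for all t. If f(t₀) = h(t₀) for some t₀ ≥ 0, then f(t) > h(t) for all t > t₀. -/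
open Set Filter Topology

theorem stmt_3 (U : ℝ → ℝ → ℝ) (K : NNReal)
    (hU_lip : LipschitzWith K (Function.uncurry U))
    (hU_anti : ∀ y : ℝ, StrictAnti (fun x => U x y))
    (hU_mono : ∀ x : ℝ, StrictMono (fun y => U x y))
    (rn ri : ℝ → ℝ)
    (hrn : ContinuousOn rn (Set.Ici 0)) (hri : ContinuousOn ri (Set.Ici 0))
    (hr : ∀ t ≥ (0 : ℝ), rn t > ri t)
    (f h : ℝ → ℝ)
    (hf : ∀ t ≥ (0 : ℝ), HasDerivAt f (U (f t) (rn t)) t)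
    (hh : ∀ t ≥ (0 : ℝ), HasDerivAt h (U (h t) (ri t)) t)
    (t₀ : ℝ) (ht₀ : 0 ≤ t₀) (heq : f t₀ = h t₀) :
    ∀ t > t₀, f t > h t := by
  set g : ℝ → ℝ := fun t => f t - h t with hg_def
  have hg : ∀ t ≥ (0 : ℝ), HasDerivAt g (U (f t) (rn t) - U (h t) (ri t)) t :=
    fun t ht => (hf t ht).sub (hh t ht)
  have contg : ∀ t ≥ (0 : ℝ), ContinuousAt g t :=
    fun t ht => (hg t ht).continuousAt
  -- derivative is positive at any crossing point
  have pd : ∀ t ≥ (0 : ℝ), g t = 0 → 0 < U (f t) (rn t) - U (h t) (ri t) := by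
    intro t ht hgt
    have hfe : f t = h t := by simpa [hg_def, sub_eq_zero] using hgt
    rw [hfe, sub_pos]
    exact hU_mono (h t) (hr t ht)
  intro T hT
  by_contra hc
  push_neg at hc
  have hgT : g T ≤ 0 := sub_nonpos.2 hc
  have hT0 : (0 : ℝ) ≤ T := le_trans ht₀ hT.le
  -- slope characterization
  have slope_tendsto : ∀ t ≥ (0 : ℝ), Tendsto (slope g t) (𝓝[≠] t)
      (𝓝 (U (f t) (rn t) - U (h t) (ri t))) := by
    intro t ht
    exact hasDerivAt_iff_tendsto_slope.1 (hg t ht)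
  -- Step 1: find s > t₀ with g s < 0
  obtain ⟨s, hs_gt, hs_neg⟩ : ∃ s, t₀ < s ∧ g s < 0 := by
    rcases lt_or_eq_of_le hgT with hlt | heq0
    · exact ⟨T, hT, hlt⟩
    -- g T = 0: derivative at T is positive, so g < 0 just before T
    · have hd := pd T hT0 heq0
      have htend : Tendsto (slope g T) (𝓝[<] T)
          (𝓝 (U (f T) (rn T) - U (h T) (ri T))) :=
        (slope_tendsto T hT0).mono_left
          (nhdsWithin_mono _ fun x hx => ne_of_lt hx)
      have h1 : ∀ᶠ x in 𝓝[<] T, 0 < slope g T x := htend.eventually_const_lt hd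
      have h2 : Ioo t₀ T ∈ 𝓝[<] T := Ioo_mem_nhdsLT_of_mem ⟨hT, le_refl T⟩
      obtain ⟨x, hx1, hx2⟩ := (h1.and (eventually_of_mem h2 fun x hx => hx)).exists
      refine ⟨x, hx2.1, ?_⟩
      have hxT : x - T < 0 := sub_neg.2 hx2.2
      have : slope g T x = g x / (x - T) := by
        simp [slope, heq0, div_eq_inv_mul]
      rw [this] at hx1
      by_contra hge
      push_neg at hge
      exact absurd hx1 (not_lt.2 (div_nonpos_of_nonneg_of_nonpos hge hxT.le))
  have hs0 : (0 : ℝ) ≤ s := le_trans ht₀ hs_gt.le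
  -- Step 2: last zero before s
  set Z : Set ℝ := {t | t ∈ Icc t₀ s ∧ g t = 0} with hZ_def
  have hZne : Z.Nonempty := ⟨t₀, ⟨le_refl _, hs_gt.le⟩, by simp [hg_def, heq]⟩
  have hcont_Icc : ContinuousOn g (Icc t₀ s) := fun x hx =>
    (contg x (le_trans ht₀ hx.1)).continuousWithinAt
  have hZclosed : IsClosed Z := by
    have : Z = Icc t₀ s ∩ g ⁻¹' {0} := by ext x; simp [hZ_def]
    rw [this]
    exact hcont_Icc.preimage_isClosed_of_isClosed isClosed_Icc isClosed_singleton
  have hZcomp : IsCompact Z :=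
    isCompact_Icc.of_isClosed_subset hZclosed fun x hx => hx.1
  set t₁ := sSup Z with ht₁_def
  have ht₁Z : t₁ ∈ Z := hZcomp.sSup_mem hZne
  have ht₁0 : (0 : ℝ) ≤ t₁ := le_trans ht₀ ht₁Z.1.1
  have ht₁s : t₁ < s := lt_of_le_of_ne ht₁Z.1.2 (fun he => by
    rw [he] at ht₁Z; exact absurd ht₁Z.2 (ne_of_lt hs_neg))
  -- g < 0 on (t₁, s]
  have hneg : ∀ x ∈ Ioc t₁ s, g x < 0 := by
    intro x hx
    by_contra hge
    push_neg at hge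
    rcases lt_or_eq_of_le hge with hpos | heq0
    · -- IVT between x and s gives a zero above t₁
      have hxs : x ≤ s := hx.2
      have hcont' : ContinuousOn g (Icc x s) := hcont_Icc.mono
        (Icc_subset_Icc (le_trans ht₁Z.1.1 hx.1.le) (le_refl s))
      have := intermediate_value_Icc' hxs hcont'
      have h0mem : (0 : ℝ) ∈ Icc (g s) (g x) := ⟨hs_neg.le, hpos.le⟩
      obtain ⟨c, hc1, hc2⟩ := this h0mem
      have hcZ : c ∈ Z := ⟨⟨le_trans ht₁Z.1.1 (le_trans hx.1.le hc1.1), hc1.2⟩, hc2⟩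
      have : c ≤ t₁ := le_csSup hZcomp.bddAbove hcZ
      exact absurd (lt_of_lt_of_le hx.1 hc1.1) (not_lt.2 this)
    · have hxZ : x ∈ Z := ⟨⟨le_trans ht₁Z.1.1 hx.1.le, hx.2⟩, heq0.symm⟩
      exact absurd (le_csSup hZcomp.bddAbove hxZ) (not_le.2 hx.1)
  -- derivative at t₁ must be ≤ 0, contradiction
  have hd := pd t₁ ht₁0 ht₁Z.2
  have htend : Tendsto (slope g t₁) (𝓝[>] t₁)
      (𝓝 (U (f t₁) (rn t₁) - U (h t₁) (ri t₁))) :=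
    (slope_tendsto t₁ ht₁0).mono_left
      (nhdsWithin_mono _ fun x hx => ne_of_gt hx)
  have h1 : ∀ᶠ x in 𝓝[>] t₁, 0 < slope g t₁ x := htend.eventually_const_lt hd
  have h2 : Ioc t₁ s ∈ 𝓝[>] t₁ := Ioc_mem_nhdsGT_of_mem ⟨le_refl _, ht₁s⟩
  obtain ⟨x, hx1, hx2⟩ := (h1.and (eventually_of_mem h2 fun x hx => hx)).exists
  have hslope : slope g t₁ x = g x / (x - t₁) := by
    simp [slope, ht₁Z.2, div_eq_inv_mul]
  rw [hslope] at hx1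
  have : g x / (x - t₁) < 0 :=
    div_neg_of_neg_of_pos (hneg x hx2) (sub_pos.2 hx2.1)
  exact absurd hx1 (not_lt.2 this.le)
end

section
/- Let U : ℝ × ℝ → ℝ be continuous, strictly decreasing in its first argument and strictly increasing in its second. Let f, h : [0,∞) → ℝ be continuously differentiable with f'(t) = U(f(t), r_n(t)) and h'(t) = U(h(t), r_i(t)), where r_n, r_i are continuous and there exists δ > 0 with U(x, r_n(t)) ≥ U(x, r_i(t)) + δ for all x in the (bounded) range of f and h and all t. Assume f and h are bounded. Then it is impossible that h(t) > f(t) for all t ≥ 0. -/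
theorem stmt_4 (U : ℝ → ℝ → ℝ)
    (hU_cont : Continuous (Function.uncurry U))
    (hU_anti : ∀ y : ℝ, StrictAnti (fun x => U x y))
    (hU_mono : ∀ x : ℝ, StrictMono (fun y => U x y))
    (rn ri : ℝ → ℝ)
    (hrn : ContinuousOn rn (Set.Ici 0)) (hri : ContinuousOn ri (Set.Ici 0))
    (f h : ℝ → ℝ)
    (hf : ∀ t ≥ (0 : ℝ), HasDerivAt f (U (f t) (rn t)) t)
    (hh : ∀ t ≥ (0 : ℝ), HasDerivAt h (U (h t) (ri t)) t)
    (M : ℝ) (hbound : ∀ t ≥ (0 : ℝ), |f t| ≤ M ∧ |h t| ≤ M)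
    (δ : ℝ) (hδ : 0 < δ)
    (hgap : ∀ t ≥ (0 : ℝ), ∀ x ∈ f '' Set.Ici 0 ∪ h '' Set.Ici 0,
      U x (rn t) ≥ U x (ri t) + δ) :
    ¬ (∀ t ≥ (0 : ℝ), h t > f t) := by
  intro hpos
  -- G t = h t - f t + δ t
  set G : ℝ → ℝ := fun t => h t - f t + δ * t with hG
  have hG' : ∀ t ≥ (0:ℝ), HasDerivAt G (U (h t) (ri t) - U (f t) (rn t) + δ) t := by
    intro t ht
    exact HasDerivAt.congr_deriv (((hh t ht).sub (hf t ht)).add ((hasDerivAt_id t).const_mul δ)) (by simp)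
  have hGle : ∀ t ≥ (0:ℝ), U (h t) (ri t) - U (f t) (rn t) + δ ≤ 0 := by
    intro t ht
    have h1 : U (h t) (rn t) ≥ U (h t) (ri t) + δ :=
      hgap t ht _ (Or.inr ⟨t, ht, rfl⟩)
    have h2 : U (h t) (rn t) < U (f t) (rn t) := hU_anti (rn t) (hpos t ht)
    linarith
  have hanti : AntitoneOn G (Set.Ici 0) := by
    apply antitoneOn_of_deriv_nonpos (convex_Ici 0)
    · intro t ht
      exact (hG' t ht).continuousAt.continuousWithinAt
    · intro t ht
      rw [interior_Ici] at ht
      exact (hG' t (le_of_lt ht)).differentiableAt.differentiableWithinAt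
    · intro t ht
      rw [interior_Ici] at ht
      have := (hG' t (le_of_lt ht)).deriv
      rw [this]
      exact hGle t (le_of_lt ht)
  set T : ℝ := (h 0 - f 0) / δ + 1 with hT
  have hT0 : (0:ℝ) ≤ T := by
    have : 0 < h 0 - f 0 := sub_pos.mpr (hpos 0 le_rfl)
    have : 0 < (h 0 - f 0) / δ := div_pos this hδ
    rw [hT]; linarith
  have hle : G T ≤ G 0 := hanti Set.self_mem_Ici hT0 hT0
  have hGT : 0 < h T - f T := sub_pos.mpr (hpos T hT0)
  have : δ * T = (h 0 - f 0) + δ := by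
    rw [hT, mul_add, mul_one, mul_div_assoc', mul_div_cancel_left₀ _ hδ.ne']
  simp only [hG, mul_zero, add_zero] at hle
  nlinarith
end

section
/- Let g ∈ (1,2), γ ∈ [0,1), ε ∈ (0, 1 - √((2-g)/g)), and let q = (1 + g + √((g-1)(g - 1 - εg + ε²g/2)))/(1-γ). Define τ = (ε²g/2 + ε - 2 - q(γ-1)(1-ε)) / (2(ε-1)(1 + g + (γ-1)q)). Then τ ∈ [1/2, 1]. -/
set_option maxHeartbeats 1000000


theorem stmt_8 (g γ ε : ℝ)
    (hg : g ∈ Set.Ioo (1 : ℝ) 2) (hγ : γ ∈ Set.Ico (0 : ℝ) 1)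
    (hε : ε ∈ Set.Ioo (0 : ℝ) (1 - Real.sqrt ((2 - g) / g)))
    (q : ℝ)
    (hq : q = (1 + g + Real.sqrt ((g - 1) * (g - 1 - ε * g + ε ^ 2 * g / 2))) / (1 - γ))
    (τ : ℝ)
    (hτ : τ = (ε ^ 2 * g / 2 + ε - 2 - q * (γ - 1) * (1 - ε)) /
        (2 * (ε - 1) * (1 + g + (γ - 1) * q))) :
    τ ∈ Set.Icc (1 / 2 : ℝ) 1 := by
  obtain ⟨hg1, hg2⟩ := hg
  obtain ⟨hγ0, hγ1⟩ := hγ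
  obtain ⟨hε0, hεu⟩ := hε
  have hgpos : (0:ℝ) < g := by linarith
  have hrnn : (0:ℝ) ≤ Real.sqrt ((2 - g) / g) := Real.sqrt_nonneg _
  have hε1 : ε < 1 := by linarith
  have hr2 : (Real.sqrt ((2 - g) / g)) ^ 2 = (2 - g) / g := by
    rw [Real.sq_sqrt]
    apply div_nonneg <;> linarith
  have h2 : (2 - g) / g < (1 - ε) ^ 2 := by nlinarith [hrnn, hεu, hr2]
  have h3 : 2 - g < g * (1 - ε) ^ 2 := by
    rw [div_lt_iff₀ hgpos] at h2; linarith
  have hB : 0 < g - 1 - ε * g + ε ^ 2 * g / 2 := by nlinarith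
  have hA : (0:ℝ) < g - 1 := by linarith
  have hABpos : 0 < (g - 1) * (g - 1 - ε * g + ε ^ 2 * g / 2) := mul_pos hA hB
  set s : ℝ := Real.sqrt ((g - 1) * (g - 1 - ε * g + ε ^ 2 * g / 2)) with hsdef
  have hs2 : s ^ 2 = (g - 1) * (g - 1 - ε * g + ε ^ 2 * g / 2) :=
    Real.sq_sqrt (le_of_lt hABpos)
  have hspos : 0 < s := Real.sqrt_pos.mpr hABpos
  clear_value s
  have h1γ : (0:ℝ) < 1 - γ := by linarith
  have hq' : q * (γ - 1) = -(1 + g + s) := by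
    rw [hq]; field_simp; ring
  have hden : 1 + g + (γ - 1) * q = -s := by
    rw [mul_comm (γ - 1) q, hq']; ring
  have h1ε : (0:ℝ) < 1 - ε := by linarith
  have hτ' : τ = ((g - 1 - ε * g + ε ^ 2 * g / 2) + (1 - ε) * s) / (2 * (1 - ε) * s) := by
    rw [hτ, hden, hq']
    rw [show ε ^ 2 * g / 2 + ε - 2 - -(1 + g + s) * (1 - ε)
        = (g - 1 - ε * g + ε ^ 2 * g / 2) + (1 - ε) * s by ring]
    rw [show 2 * (ε - 1) * -s = 2 * (1 - ε) * s by ring]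
  have hdenpos : 0 < 2 * (1 - ε) * s := by positivity
  have hkey : (g - 1 - ε * g + ε ^ 2 * g / 2) ≤ (1 - ε) * s := by
    have h4 : 0 ≤ ε * (2 - g) * (1 - ε / 2) := by
      apply mul_nonneg (mul_nonneg hε0.le (by linarith)) (by linarith)
    have hBle : (g - 1 - ε * g + ε ^ 2 * g / 2) ≤ (1 - ε) ^ 2 * (g - 1) := by nlinarith [h4]
    have h5 := mul_le_mul_of_nonneg_right hBle hB.le
    have hsq : (g - 1 - ε * g + ε ^ 2 * g / 2) ^ 2 ≤ ((1 - ε) * s) ^ 2 := by nlinarith [h5, hs2]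
    exact (pow_le_pow_iff_left₀ hB.le (mul_pos h1ε hspos).le two_ne_zero).mp hsq
  constructor
  · rw [hτ', le_div_iff₀ hdenpos]
    nlinarith
  · rw [hτ', div_le_one hdenpos]
    linarith
end

section
/- Consider the symmetric fluid dynamics of greedy Q-learning (ε → 0 limit, γ = 0) in the two-price Bertrand game: in the region where both firms prefer price 2, dQ_2/dt = α(1 - Q_2) and dQ_{0.5}/dt = 0; in the region where both prefer 0.5, dQ_{0.5}/dt = α(5/8 - Q_{0.5}) and dQ_2/dt = 0. Then any trajectory starting with Q_2(0) > Q_{0.5}(0) and Q_2(0) ≤ 1, Q_{0.5}(0) < 1 remains forever in the region Q_2 > Q_{0.5} if Q_{0.5}(0) < 1, converging to Q_2 = 1 (the collusive outcome); any trajectory starting with Q_{0.5}(0) > Q_2(0) and Q_2(0) < 5/8 converges to Q_{0.5} = 5/8 (the competitive outcome). -/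
open Filter

private lemma aux_key (α c : ℝ) (hα : 0 < α) (f g : ℝ → ℝ)
    (hf : Continuous f) (hg : Continuous g)
    (hd : ∀ t ≥ (0 : ℝ), f t > g t →
      HasDerivAt f (α * (c - f t)) t ∧ HasDerivAt g 0 t)
    (h0 : g 0 < f 0) (hgc : g 0 < c) :
    (∀ t ≥ (0 : ℝ), f t > g t) ∧ Tendsto f atTop (nhds c) := by
  -- F t = (f t - c) * exp (α t) has zero derivative in the region
  set F : ℝ → ℝ := fun t => (f t - c) * Real.exp (α * t) with hF
  have hFcont : Continuous F := by
    exact ((hf.sub continuous_const).mul ((Real.continuous_exp).comp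
      (continuous_const.mul continuous_id)))
  have hFderiv : ∀ t ≥ (0 : ℝ), f t > g t → HasDerivAt F 0 t := by
    intro t ht hgt
    have hde : HasDerivAt (fun t => Real.exp (α * t)) (α * Real.exp (α * t)) t := by
      have := (Real.hasDerivAt_exp (α * t)).comp t ((hasDerivAt_id t).const_mul α)
      simpa [mul_comm, Function.comp_def] using this
    have h1 : HasDerivAt (fun t => f t - c) (α * (c - f t)) t :=
      ((hd t ht hgt).1).sub_const c
    have := h1.mul hde
    have hz : α * (c - f t) * Real.exp (α * t) + (f t - c) * (α * Real.exp (α * t)) = 0 := by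
      ring
    simpa [hF, hz, Pi.mul_def] using this
  -- constancy of F and g on intervals contained in the region
  have hconst : ∀ T : ℝ, 0 ≤ T → (∀ s, 0 ≤ s → s < T → f s > g s) →
      F T = F 0 ∧ g T = g 0 := by
    intro T hT hreg
    have hFc : ∀ x ∈ Set.Icc (0 : ℝ) T, F x = F 0 := by
      apply constant_of_has_deriv_right_zero (hFcont.continuousOn)
      intro x hx
      exact (hFderiv x hx.1 (hreg x hx.1 hx.2)).hasDerivWithinAt
    have hgcst : ∀ x ∈ Set.Icc (0 : ℝ) T, g x = g 0 := by
      apply constant_of_has_deriv_right_zero (hg.continuousOn)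
      intro x hx
      exact ((hd x hx.1 (hreg x hx.1 hx.2)).2).hasDerivWithinAt
    exact ⟨hFc T ⟨hT, le_rfl⟩, hgcst T ⟨hT, le_rfl⟩⟩
  -- invariance
  have inv : ∀ t ≥ (0 : ℝ), f t > g t := by
    by_contra h
    push_neg at h
    obtain ⟨t0, ht0, hle⟩ := h
    set S : Set ℝ := {t | 0 ≤ t ∧ f t ≤ g t} with hS
    have hSclosed : IsClosed S := by
      have : S = {t | 0 ≤ t} ∩ {t | f t ≤ g t} := rfl
      rw [this]
      exact (isClosed_le continuous_const continuous_id).inter (isClosed_le hf hg)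
    have hSne : S.Nonempty := ⟨t0, ht0, hle⟩
    have hSbdd : BddBelow S := ⟨0, fun x hx => hx.1⟩
    set t₁ := sInf S with ht₁
    have ht₁mem : t₁ ∈ S := hSclosed.csInf_mem hSne hSbdd
    have ht₁pos : 0 < t₁ := by
      rcases lt_or_eq_of_le ht₁mem.1 with h' | h'
      · exact h'
      · exfalso; have := ht₁mem.2; rw [← h'] at this; linarith
    have hreg : ∀ s, 0 ≤ s → s < t₁ → f s > g s := by
      intro s hs hst
      by_contra hns
      push_neg at hns
      have : t₁ ≤ s := csInf_le hSbdd ⟨hs, hns⟩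
      linarith
    obtain ⟨hFeq, hgeq⟩ := hconst t₁ ht₁pos.le hreg
    have hE1 : (1 : ℝ) ≤ Real.exp (α * t₁) := by
      rw [← Real.exp_zero]
      exact Real.exp_le_exp.mpr (by positivity)
    -- f t₁ ≤ g t₁ = g 0 < c, so f t₁ - c < 0
    have hft1 : f t₁ ≤ g 0 := by rw [← hgeq]; exact ht₁mem.2
    have hneg : f t₁ - c < 0 := by linarith
    have hFeq' : (f t₁ - c) * Real.exp (α * t₁) = f 0 - c := by
      simpa [hF] using hFeq
    have : f 0 - c ≤ f t₁ - c := by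
      rw [← hFeq']
      nlinarith
    linarith
  refine ⟨inv, ?_⟩
  -- explicit formula
  have hform : ∀ t ≥ (0 : ℝ), f t = c + (f 0 - c) * Real.exp (-(α * t)) := by
    intro t ht
    obtain ⟨hFeq, _⟩ := hconst t ht (fun s hs _ => inv s hs)
    have hFeq' : (f t - c) * Real.exp (α * t) = f 0 - c := by
      simpa [hF] using hFeq
    have hne : Real.exp (α * t) ≠ 0 := (Real.exp_pos _).ne'
    rw [Real.exp_neg]
    field_simp
    linarith [hFeq']
  have hlim : Tendsto (fun t => c + (f 0 - c) * Real.exp (-(α * t))) atTop (nhds (c + (f 0 - c) * 0)) := by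
    apply Tendsto.add tendsto_const_nhds
    apply Tendsto.const_mul
    apply Real.tendsto_exp_atBot.comp
    apply tendsto_neg_atBot_iff.mpr
    exact Tendsto.const_mul_atTop hα tendsto_id
  have : Tendsto f atTop (nhds (c + (f 0 - c) * 0)) := by
    apply hlim.congr'
    filter_upwards [eventually_ge_atTop (0 : ℝ)] with t ht
    exact (hform t ht).symm
  simpa using this

theorem stmt_15 (α : ℝ) (hα : 0 < α) (Q2 Q05 : ℝ → ℝ)
    (hcont2 : Continuous Q2) (hcont05 : Continuous Q05)
    -- in the region where both firms prefer the high price 2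
    (hhigh : ∀ t ≥ (0 : ℝ), Q2 t > Q05 t →
      HasDerivAt Q2 (α * (1 - Q2 t)) t ∧ HasDerivAt Q05 0 t)
    -- in the region where both firms prefer the low price 0.5
    (hlow : ∀ t ≥ (0 : ℝ), Q05 t > Q2 t →
      HasDerivAt Q05 (α * (5 / 8 - Q05 t)) t ∧ HasDerivAt Q2 0 t) :
    -- collusive region of attraction
    ((Q2 0 > Q05 0 ∧ Q2 0 ≤ 1 ∧ Q05 0 < 1) →
      (∀ t ≥ (0 : ℝ), Q2 t > Q05 t) ∧ Tendsto Q2 atTop (nhds 1)) ∧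
    -- competitive region of attraction
    ((Q05 0 > Q2 0 ∧ Q2 0 < 5 / 8) →
      Tendsto Q05 atTop (nhds (5 / 8))) := by
  constructor
  · rintro ⟨h1, _, h3⟩
    exact aux_key α 1 hα Q2 Q05 hcont2 hcont05 hhigh h1 h3
  · rintro ⟨h1, h2⟩
    exact (aux_key α (5 / 8) hα Q05 Q2 hcont05 hcont2 hlow h1 h2).2
end
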